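/- arXiv:2409.19279 — 2 statements merged into one kernel-verified Lean document; each statement's English description precedes it below -/
import Mathlib

section
/- (Part I of the proof of Theorem 2: Lyapunov decrement.) Fix k ≥ 1 and suppose 0 < s_k ≤ s_{k+1} and s_{k+1} ≤ 2/L̃_{k+1}. Suppose further that s_{k+1} satisfies the four-case bound: (i) if w_{k+1} ≤ 0 and r_{k+1} ≥ 0 then s_{k+1}·b_{k+1} ≤ 4·a_{k+1}; (ii) if w_{k+1} ≤ 0 and r_{k+1} < 0 then s_{k+1}·(A_k·b_{k+1} + θ_{k+1}·(−r_{k+1})) ≤ 4·A_k·a_{k+1}; (iii) if w_{k+1} > 0 and r_{k+1} ≥ 0 then s_{k+1}·b̃_{k+1} ≤ 4·ã_{k+1}; (iv) if w_{k+1} > 0 and r_{k+1} < 0 then s_{k+1}·(A_k·b̃_{k+1} + θ_{k+1}·(−r_{k+1})) ≤ 4·A_k·ã_{k+1}. Then V_{k+1} ≤ V_k. -/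
open scoped RealInnerProductSpace

noncomputable section

/-- `θ_k = k/2`. -/
def thetaSeq (k : ℕ) : ℝ := (k : ℝ) / 2

/-- `c_k = θ_{k+1} / (θ_{k+1}² − θ_k²)`. -/
def cSeq (k : ℕ) : ℝ := thetaSeq (k + 1) / (thetaSeq (k + 1) ^ 2 - thetaSeq k ^ 2)

/-- `A_k = c_k · θ_k²`. -/
def ASeq (k : ℕ) : ℝ := cSeq k * thetaSeq k ^ 2

variable {H : Type*} [NormedAddCommGroup H] [InnerProductSpace ℝ H] [FiniteDimensional ℝ H]

/-- `G_k(Y) = (2θ_k h)^{−β} ∇F(Y) + L̃Y`. -/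
def Gmap (h β : ℝ) (F : H → ℝ) (L : H →L[ℝ] H) (k : ℕ) (Y : H) : H :=
  ((2 * thetaSeq k * h) ^ (-β)) • gradient F Y + L Y

/-- `L̃_k = 2·max{λ̄, (kh)^{−β}·L_f}`. -/
def LSmooth (lambar Lf h β : ℝ) (k : ℕ) : ℝ :=
  2 * max lambar (((k : ℝ) * h) ^ (-β) * Lf)

/-- Lyapunov function `V_k` (for `k ≥ 1`). -/
def VSeq (h β : ℝ) (F : H → ℝ) (L : H →L[ℝ] H) (Xs : H) (X Z : ℕ → H) (s : ℕ → ℝ)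
    (k : ℕ) : ℝ :=
  2 * ASeq k * (((2 * thetaSeq k * h) ^ (-β)) * (F (X k) - F Xs)
      + (1 / 2) * ⟪X k - Xs, L (X k - Xs)⟫
      - (s k / 4) * ‖Gmap h β F L k (X k)‖ ^ 2)
    + (1 / s k) * ‖Z (k + 1) - Xs‖ ^ 2

/-- `a_{k+1}` (indexed so that `aSeq … k = a_{k+1}`). -/
def aSeq (h β : ℝ) (F : H → ℝ) (L : H →L[ℝ] H) (Xs : H) (X : ℕ → H) (k : ℕ) : ℝ :=
  ((2 * thetaSeq k * h) ^ (-β)) * (F (X k) - F Xs)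
    + (1 / 2) * ⟪X k - Xs, L (X k - Xs)⟫
    - ((2 * thetaSeq (k + 1) * h) ^ (-β)) * (F (X (k + 1)) - F Xs)
    - (1 / 2) * ⟪X (k + 1) - Xs, L (X (k + 1) - Xs)⟫
    - ⟪Gmap h β F L (k + 1) (X (k + 1)), X k - X (k + 1)⟫

/-- `b_{k+1}` (indexed so that `bSeq … k = b_{k+1}`). -/
def bSeq (h β : ℝ) (F : H → ℝ) (L : H →L[ℝ] H) (X : ℕ → H) (k : ℕ) : ℝ :=
  ‖Gmap h β F L k (X k) - Gmap h β F L (k + 1) (X (k + 1))‖ ^ 2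

/-- `ã_{k+1}` (indexed so that `atilSeq … k = ã_{k+1}`). -/
def atilSeq (h β : ℝ) (F : H → ℝ) (L : H →L[ℝ] H) (Xs : H) (X : ℕ → H) (s : ℕ → ℝ)
    (k : ℕ) : ℝ :=
  aSeq h β F L Xs X k
    + (s k / 2) * ⟪Gmap h β F L (k + 1) (X (k + 1)), Gmap h β F L k (X k)⟫

/-- `b̃_{k+1}` (indexed so that `btilSeq … k = b̃_{k+1}`). -/
def btilSeq (h β : ℝ) (F : H → ℝ) (L : H →L[ℝ] H) (X : ℕ → H) (k : ℕ) : ℝ :=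
  ‖Gmap h β F L k (X k)‖ ^ 2 + ‖Gmap h β F L (k + 1) (X (k + 1))‖ ^ 2

/-- `w_{k+1}` (indexed so that `wSeq … k = w_{k+1}`). -/
def wSeq (h β : ℝ) (F : H → ℝ) (L : H →L[ℝ] H) (X : ℕ → H) (k : ℕ) : ℝ :=
  ⟪Gmap h β F L (k + 1) (X (k + 1)), Gmap h β F L k (X k)⟫

/-- `r_{k+1}` (indexed so that `rSeq … k = r_{k+1}`). -/
def rSeq (h β : ℝ) (F : H → ℝ) (L : H →L[ℝ] H) (Xs : H) (X : ℕ → H) (k : ℕ) : ℝ :=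
  -‖((2 * thetaSeq (k + 1) * h) ^ (-β)) • gradient F Xs‖ ^ 2
    + 2 * ⟪((2 * thetaSeq (k + 1) * h) ^ (-β)) • gradient F Xs,
        ((2 * thetaSeq (k + 1) * h) ^ (-β)) • gradient F Xs
          - Gmap h β F L (k + 1) (X (k + 1))⟫

/-- `q_{k+1}` (indexed so that `qSeq … k = q_{k+1}`). -/
def qSeq (h β : ℝ) (F : H → ℝ) (L : H →L[ℝ] H) (Xs : H) (X : ℕ → H) (s : ℕ → ℝ)
    (k : ℕ) : ℝ :=
  aSeq h β F L Xs X k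
    - (s (k + 1) / 4) * ‖Gmap h β F L k (X k)‖ ^ 2
    - (s (k + 1) / 4) * ‖Gmap h β F L (k + 1) (X (k + 1))‖ ^ 2
    + (s k / 2) * ⟪Gmap h β F L (k + 1) (X (k + 1)), Gmap h β F L k (X k)⟫

theorem hasDerivAt_comp_line (φ : H → ℝ) (hd : Differentiable ℝ φ) (x v : H) (t : ℝ) :
    HasDerivAt (fun τ : ℝ => φ (x + τ • v)) ⟪gradient φ (x + t • v), v⟫ t := by
  have h1 : HasDerivAt (fun τ : ℝ => x + τ • v) v t := by
    simpa using ((hasDerivAt_id t).smul_const v).const_add x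
  have h2 : HasFDerivAt φ (InnerProductSpace.toDual ℝ H (gradient φ (x + t • v))) (x + t • v) :=
    (hd _).hasGradientAt.hasFDerivAt
  have h3 := h2.comp_hasDerivAt t h1
  simp only [InnerProductSpace.toDual_apply_apply] at h3
  exact h3

theorem grad_ineq (φ : H → ℝ) (hd : Differentiable ℝ φ) (hc : ConvexOn ℝ Set.univ φ)
    (x y : H) : φ x + ⟪gradient φ x, y - x⟫ ≤ φ y := by
  set v := y - x with hv
  have g0 : HasDerivAt (fun τ : ℝ => φ (x + τ • v)) ⟪gradient φ x, v⟫ 0 := by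
    simpa using hasDerivAt_comp_line φ hd x v 0
  have gc : ConvexOn ℝ Set.univ (fun τ : ℝ => φ (x + τ • v)) := by
    have := hc.comp_affineMap (AffineMap.lineMap x y : ℝ →ᵃ[ℝ] H)
    simp only [Set.preimage_univ] at this
    refine this.congr (fun τ _ => ?_); symm
    simp [AffineMap.lineMap_apply, hv]
    rw [add_comm]
  have := gc.le_slope_of_hasDerivAt (Set.mem_univ (0:ℝ)) (Set.mem_univ (1:ℝ)) one_pos g0
  rw [slope_def_field] at this
  simp at this
  have hxy : x + v = y := by rw [hv]; abel
  rw [hxy] at this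
  have hfg : (fderiv ℝ φ x) v = ⟪gradient φ x, v⟫ := by
    rw [(hd x).hasGradientAt.hasFDerivAt.fderiv, InnerProductSpace.toDual_apply_apply]
  linarith [this, hfg]

theorem descent_lemma (φ : H → ℝ) (hd : Differentiable ℝ φ) (M : ℝ) (hM : 0 ≤ M)
    (hl : ∀ a b : H, ‖gradient φ a - gradient φ b‖ ≤ M * ‖a - b‖)
    (x y : H) : φ y ≤ φ x + ⟪gradient φ x, y - x⟫ + M / 2 * ‖y - x‖ ^ 2 := by
  set v := y - x with hv
  set g' : ℝ → ℝ := fun τ => ⟪gradient φ (x + τ • v), v⟫ with hg'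
  have hg : ∀ t : ℝ, HasDerivAt (fun τ : ℝ => φ (x + τ • v)) (g' t) t :=
    fun t => hasDerivAt_comp_line φ hd x v t
  have hgradcont : Continuous fun z : H => gradient φ z := by
    have : LipschitzWith (Real.toNNReal M) (fun z : H => gradient φ z) := by
      apply LipschitzWith.of_dist_le_mul
      intro a b
      rw [dist_eq_norm, dist_eq_norm]
      simpa [Real.coe_toNNReal M hM] using hl a b
    exact this.continuous
  have hcont : Continuous g' := by
    apply Continuous.inner
    · exact hgradcont.comp (by continuity)
    · exact continuous_const
  have hint : ∫ t in (0:ℝ)..1, g' t = φ (x + (1:ℝ) • v) - φ (x + (0:ℝ) • v) :=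
    intervalIntegral.integral_eq_sub_of_hasDerivAt (fun t _ => hg t)
      (hcont.intervalIntegrable 0 1)
  have hbound : ∀ t ∈ Set.Icc (0:ℝ) 1, g' t ≤ g' 0 + M * ‖v‖ ^ 2 * t := by
    intro t ht
    have h1 : g' t - g' 0 ≤ ‖gradient φ (x + t • v) - gradient φ (x + (0:ℝ) • v)‖ * ‖v‖ := by
      have := real_inner_le_norm (gradient φ (x + t • v) - gradient φ (x + (0:ℝ) • v)) v
      simpa [hg', inner_sub_left, sub_le_iff_le_add] using this.trans_eq rfl
    have h2 : ‖gradient φ (x + t • v) - gradient φ (x + (0:ℝ) • v)‖ ≤ M * (t * ‖v‖) := by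
      have := hl (x + t • v) (x + (0:ℝ) • v)
      have heq : x + t • v - (x + (0:ℝ) • v) = t • v := by
        simp
      rw [heq] at this
      simpa [norm_smul, abs_of_nonneg ht.1] using this
    have h3 : ‖gradient φ (x + t • v) - gradient φ (x + (0:ℝ) • v)‖ * ‖v‖
        ≤ M * (t * ‖v‖) * ‖v‖ := by
      apply mul_le_mul_of_nonneg_right h2 (norm_nonneg v)
    nlinarith [h1, h3]
  have hintle : ∫ t in (0:ℝ)..1, g' t ≤ ∫ t in (0:ℝ)..1, (g' 0 + M * ‖v‖ ^ 2 * t) := by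
    apply intervalIntegral.integral_mono_on zero_le_one (hcont.intervalIntegrable 0 1)
    · exact (Continuous.intervalIntegrable (by continuity) 0 1)
    · exact hbound
  have hval : ∫ t in (0:ℝ)..1, (g' 0 + M * ‖v‖ ^ 2 * t) = g' 0 + M * ‖v‖ ^ 2 / 2 := by
    rw [intervalIntegral.integral_add (intervalIntegrable_const)
      (Continuous.intervalIntegrable (by fun_prop) 0 1)]
    rw [intervalIntegral.integral_const_mul]
    simp [integral_id]
    ring
  have hg'0 : g' 0 = ⟪gradient φ x, v⟫ := by simp [hg']
  have hxy1 : x + (1:ℝ) • v = y := by rw [hv]; simp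
  have hxy0 : x + (0:ℝ) • v = x := by simp
  rw [hxy1, hxy0] at hint
  rw [hint] at hintle
  rw [hval, hg'0] at hintle
  linarith [hintle]

theorem hasGradientAt_quad (L : H →L[ℝ] H) (hsym : ∀ x y : H, ⟪L x, y⟫ = ⟪x, L y⟫) (z : H) :
    HasGradientAt (fun y : H => (1/2) * ⟪y, L y⟫) (L z) z := by
  have h1 : HasFDerivAt (fun y : H => ⟪y, L y⟫)
      ((fderivInnerCLM ℝ (z, L z)).comp ((ContinuousLinearMap.id ℝ H).prod L)) z := by
    simpa using HasFDerivAt.inner ℝ (hasFDerivAt_id z) (L.hasFDerivAt (x := z))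
  have h2 := h1.const_mul (1/2 : ℝ)
  rw [hasGradientAt_iff_hasFDerivAt]
  convert h2 using 1
  · rfl
  apply ContinuousLinearMap.ext
  intro v
  simp only [InnerProductSpace.toDual_apply_apply, ContinuousLinearMap.smul_apply,
    ContinuousLinearMap.comp_apply, ContinuousLinearMap.prod_apply,
    ContinuousLinearMap.id_apply, fderivInnerCLM_apply, smul_eq_mul]
  have e1 : ⟪z, L v⟫ = ⟪L z, v⟫ := (hsym z v).symm
  have e2 : ⟪v, L z⟫ = ⟪L z, v⟫ := real_inner_comm _ _
  rw [e1, e2]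
  ring

theorem convexOn_quad (L : H →L[ℝ] H) (hsym : ∀ x y : H, ⟪L x, y⟫ = ⟪x, L y⟫)
    (hpsd : ∀ x : H, 0 ≤ ⟪x, L x⟫) :
    ConvexOn ℝ Set.univ (fun y : H => (1/2) * ⟪y, L y⟫) := by
  refine ⟨convex_univ, fun x _ y _ a b ha hb hab => ?_⟩
  have hxy := hpsd (x - y)
  have hexp : ⟪x - y, L (x - y)⟫ = ⟪x, L x⟫ - ⟪x, L y⟫ - ⟪y, L x⟫ + ⟪y, L y⟫ := by
    simp [map_sub, inner_sub_left, inner_sub_right]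
    ring
  rw [hexp] at hxy
  have hyx : ⟪y, L x⟫ = ⟪x, L y⟫ := by rw [← hsym y x, real_inner_comm]
  rw [hyx] at hxy
  have hgoal : ⟪a • x + b • y, L (a • x + b • y)⟫
      = a^2 * ⟪x, L x⟫ + 2*a*b*⟪x, L y⟫ + b^2*⟪y, L y⟫ := by
    simp [map_add, map_smul, inner_add_left, inner_add_right, real_inner_smul_left,
      real_inner_smul_right, hyx]
    ring
  simp only [smul_eq_mul]
  rw [hgoal]
  have hb' : b = 1 - a := by linarith
  rw [hb']
  have hb1 : (0:ℝ) ≤ 1 - a := by linarith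
  nlinarith [mul_nonneg (mul_nonneg ha hb1) hxy]

lemma thetaSeq_succ (k : ℕ) : thetaSeq (k+1) = ((k:ℝ)+1)/2 := by
  simp only [thetaSeq]; push_cast; ring

lemma dSeq_pos (k : ℕ) : 0 < thetaSeq (k+1)^2 - thetaSeq k^2 := by
  have hx : (0:ℝ) ≤ (k:ℝ) := Nat.cast_nonneg k
  rw [thetaSeq_succ]; simp only [thetaSeq]; nlinarith

lemma ASeq_eq (k : ℕ) : ASeq k = (k:ℝ)^2*((k:ℝ)+1)/(2*(2*(k:ℝ)+1)) := by
  have hx : (0:ℝ) ≤ (k:ℝ) := Nat.cast_nonneg k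
  have h2 : (2*(k:ℝ)+1) ≠ 0 := by positivity
  simp only [ASeq, cSeq, thetaSeq_succ, thetaSeq]
  push_cast
  rw [div_mul_eq_mul_div, div_eq_div_iff (by nlinarith) (by positivity)]
  ring

lemma ASeq_nonneg (k : ℕ) : 0 ≤ ASeq k := by
  have hx : (0:ℝ) ≤ (k:ℝ) := Nat.cast_nonneg k
  rw [ASeq_eq]; positivity

lemma ASeq_mul (k : ℕ) :
    ASeq k * (thetaSeq (k+1)^2 - thetaSeq k^2) = thetaSeq (k+1) * thetaSeq k^2 := by
  have hd := dSeq_pos k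
  simp only [ASeq, cSeq]
  field_simp

lemma ASeq_add_mul (k : ℕ) :
    (ASeq k + thetaSeq (k+1)) * (thetaSeq (k+1)^2 - thetaSeq k^2)
      = thetaSeq (k+1) * thetaSeq (k+1)^2 := by
  have h := ASeq_mul k
  linear_combination h

lemma ASeq_succ_le (k : ℕ) : ASeq (k+1) ≤ ASeq k + thetaSeq (k+1) := by
  have hx : (0:ℝ) ≤ (k:ℝ) := Nat.cast_nonneg k
  have hsum : ASeq k + thetaSeq (k+1) = ((k:ℝ)+1)^3/(2*(2*(k:ℝ)+1)) := by
    rw [ASeq_eq, thetaSeq_succ]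
    rw [div_add_div _ _ (by positivity) (by norm_num), div_eq_div_iff (by positivity) (by positivity)]
    ring
  have h2 : ASeq (k+1) = ((k:ℝ)+1)^2*((k:ℝ)+2)/(2*(2*(k:ℝ)+3)) := by
    rw [ASeq_eq]; push_cast; ring
  rw [hsum, h2]
  rw [div_le_div_iff₀ (by positivity) (by positivity)]
  nlinarith [sq_nonneg ((k:ℝ)+1)]

lemma P3_lemma (k : ℕ) :
    thetaSeq (k+1)^2 - thetaSeq (k+1)/2 - (ASeq (k+1) + ASeq k)/2 ≤ 0 := by
  have hx : (0:ℝ) ≤ (k:ℝ) := Nat.cast_nonneg k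
  have h1 : ASeq k = (k:ℝ)^2*((k:ℝ)+1)/(2*(2*(k:ℝ)+1)) := ASeq_eq k
  have h2 : ASeq (k+1) = ((k:ℝ)+1)^2*((k:ℝ)+2)/(2*(2*(k:ℝ)+3)) := by
    rw [ASeq_eq]; push_cast; ring_nf
  rw [h1, h2, thetaSeq_succ]
  rw [sub_nonpos]
  have e : (((k:ℝ)+1)^2*((k:ℝ)+2)/(2*(2*(k:ℝ)+3)) + (k:ℝ)^2*((k:ℝ)+1)/(2*(2*(k:ℝ)+1)))/2
      = (((k:ℝ)+1)^2*((k:ℝ)+2)*(2*(2*(k:ℝ)+1)) + (k:ℝ)^2*((k:ℝ)+1)*(2*(2*(k:ℝ)+3)))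
        /(2*(2*(2*(k:ℝ)+3))*(2*(2*(k:ℝ)+1))) := by
    rw [div_add_div _ _ (by positivity) (by positivity), div_div]
    rw [div_eq_div_iff (by positivity) (by positivity)]
    ring
  rw [e, le_div_iff₀ (by positivity)]
  nlinarith [mul_nonneg hx (sq_nonneg ((k:ℝ)+1)), sq_nonneg ((k:ℝ)+1)]


theorem q_aux1 (a n1 n2 w s₁ s₂ : ℝ) (h12 : s₁ ≤ s₂) (hw : w ≤ 0)
    (hc : s₂ * (n1 - 2*w + n2) ≤ 4 * a) :
    0 ≤ a - (s₂/4)*n1 - (s₂/4)*n2 + (s₁/2)*w := by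
  nlinarith [mul_nonneg (sub_nonneg.2 h12) (neg_nonneg.2 hw)]

theorem q_aux2 (a n1 n2 w s₁ s₂ : ℝ)
    (hc : s₂ * (n1 + n2) ≤ 4 * (a + (s₁/2)*w)) :
    0 ≤ a - (s₂/4)*n1 - (s₂/4)*n2 + (s₁/2)*w := by linarith

theorem key_ineq (A A' t s₁ s₂ E1 E2 p1 p2 w n1 n2 U I : ℝ)
    (hA : 0 ≤ A) (ht : 0 < t) (hs₁ : 0 < s₁) (h12 : s₁ ≤ s₂)
    (hA2 : A' ≤ A + t)
    (hP3 : t^2 - t/2 - (A' + A)/2 ≤ 0)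
    (hq : 0 ≤ E1 - E2 - (p1 - p2) - (s₂/4)*n1 - (s₂/4)*n2 + (s₁/2)*w)
    (hE2 : 0 ≤ E2) (hF2 : E2 + (s₂/4)*n2 ≤ p2)
    (hn1 : 0 ≤ n1) (hn2 : 0 ≤ n2) (hU : 0 ≤ U)
    (hI : 2*t*I = 2*(A+t)*p2 - 2*A*p1 + A*s₁*w) :
    2*A'*(E2 - (s₂/4)*n2) + (1/s₂)*U - 2*t*I + s₂*t^2*n2
      ≤ 2*A*(E1 - (s₁/4)*n1) + (1/s₁)*U := by
  have hs₂ : 0 < s₂ := lt_of_lt_of_le hs₁ h12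
  have hT1 : 0 ≤ 2*A*(E1 - E2 - (p1 - p2) - (s₂/4)*n1 - (s₂/4)*n2 + (s₁/2)*w) :=
    mul_nonneg (by linarith) hq
  have hT2 : 0 ≤ 2*((A + t) - A')*E2 := mul_nonneg (by linarith) hE2
  have hT3 : 0 ≤ (A/2)*((s₂ - s₁)*n1) :=
    mul_nonneg (by linarith) (mul_nonneg (by linarith) hn1)
  have hT4 : 0 ≤ (1/s₁ - 1/s₂)*U := by
    apply mul_nonneg _ hU
    have := one_div_le_one_div_of_le hs₁ h12
    linarith
  have hT5 : 0 ≤ s₂*(((t/2 + (A'+A)/2) - t^2)*n2) :=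
    mul_nonneg hs₂.le (mul_nonneg (by linarith) hn2)
  have hT6 : 0 ≤ 2*t*(p2 - (E2 + (s₂/4)*n2)) :=
    mul_nonneg (by linarith) (by linarith)
  nlinarith [hT1, hT2, hT3, hT4, hT5, hT6, hI]

set_option maxHeartbeats 1600000 in
/-- Lyapunov decrement (proof of Theorem 2, Part I): under the four-case
step-size bound, `V_{k+1} ≤ V_k`. -/
theorem lyapunov_decrement
    (F : H → ℝ) (hF : Differentiable ℝ F) (hconv : ConvexOn ℝ Set.univ F)
    (Lf : ℝ) (hLf : 0 < Lf)
    (hlip : ∀ x y : H, ‖gradient F x - gradient F y‖ ≤ Lf * ‖x - y‖)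
    (L : H →L[ℝ] H) (hsym : ∀ x y : H, ⟪L x, y⟫ = ⟪x, L y⟫)
    (hpsd : ∀ x : H, 0 ≤ ⟪x, L x⟫)
    (lambar : ℝ) (hlam : ‖L‖ = lambar)
    (Xs : H) (hXs : L Xs = 0) (hmin : ∀ Y : H, F Xs ≤ F Y)
    (h β : ℝ) (hh : 0 < h) (hβ0 : 0 < β) (hβ2 : β < 2)
    (X Xp Z : ℕ → H) (s : ℕ → ℝ)
    (hspos : ∀ k, 1 ≤ k → 0 < s k)
    (hXp : ∀ k, 1 ≤ k → Xp k = X k - (s k / 2) • Gmap h β F L k (X k))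
    (hZupd : ∀ k, 1 ≤ k → Z (k + 1) = Z k - (s k * thetaSeq k) • Gmap h β F L k (X k))
    (hXupd : ∀ k, 1 ≤ k → X (k + 1) = (thetaSeq k ^ 2 / thetaSeq (k + 1) ^ 2) • Xp k
        + (1 - thetaSeq k ^ 2 / thetaSeq (k + 1) ^ 2) • Z (k + 1))
    (k : ℕ) (hk : 1 ≤ k)
    (hmono : s k ≤ s (k + 1))
    (hstep : s (k + 1) ≤ 2 / LSmooth lambar Lf h β (k + 1))
    (hcase₁ : wSeq h β F L X k ≤ 0 → 0 ≤ rSeq h β F L Xs X k →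
      s (k + 1) * bSeq h β F L X k ≤ 4 * aSeq h β F L Xs X k)
    (hcase₂ : wSeq h β F L X k ≤ 0 → rSeq h β F L Xs X k < 0 →
      s (k + 1) * (ASeq k * bSeq h β F L X k
          + thetaSeq (k + 1) * (-(rSeq h β F L Xs X k)))
        ≤ 4 * ASeq k * aSeq h β F L Xs X k)
    (hcase₃ : 0 < wSeq h β F L X k → 0 ≤ rSeq h β F L Xs X k →
      s (k + 1) * btilSeq h β F L X k ≤ 4 * atilSeq h β F L Xs X s k)
    (hcase₄ : 0 < wSeq h β F L X k → rSeq h β F L Xs X k < 0 →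
      s (k + 1) * (ASeq k * btilSeq h β F L X k
          + thetaSeq (k + 1) * (-(rSeq h β F L Xs X k)))
        ≤ 4 * ASeq k * atilSeq h β F L Xs X s k)
    :
    VSeq h β F L Xs X Z s (k + 1) ≤ VSeq h β F L Xs X Z s k := by
  have hs₁ : 0 < s k := hspos k hk
  have hs₂ : 0 < s (k+1) := hspos (k+1) (by omega)
  have hs₂ne : s (k+1) ≠ 0 := ne_of_gt hs₂
  have htpos : 0 < thetaSeq (k+1) := by rw [thetaSeq_succ]; positivity
  have hc2pos : 0 < (2 * thetaSeq (k+1) * h) ^ (-β) := Real.rpow_pos_of_pos (by positivity) _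
  have hgrad0 : gradient F Xs = 0 := by
    have hloc : IsLocalMin F Xs := Filter.Eventually.of_forall fun y => hmin y
    have hfd : fderiv ℝ F Xs = 0 := hloc.fderiv_eq_zero
    simp [gradient, hfd]
  have hXsin : ∀ z : H, ⟪Xs, L z⟫ = 0 := fun z => by
    rw [← hsym, hXs, inner_zero_left]
  have hquadXs : ∀ z : H, ⟪z - Xs, L (z - Xs)⟫ = ⟪z, L z⟫ := fun z => by
    rw [map_sub, hXs, sub_zero, inner_sub_left, hXsin z, sub_zero]
  set G1 := Gmap h β F L k (X k) with hG1
  set G2 := Gmap h β F L (k+1) (X (k+1)) with hG2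
  set Φ : H → ℝ := fun y => ((2 * thetaSeq (k+1) * h) ^ (-β)) * F y + (1/2) * ⟪y, L y⟫
    with hΦdef
  have hgradPhi : ∀ z : H, HasGradientAt Φ (Gmap h β F L (k+1) z) z := by
    intro z
    rw [hasGradientAt_iff_hasFDerivAt]
    have h1 : HasFDerivAt F (InnerProductSpace.toDual ℝ H (gradient F z)) z :=
      (hF z).hasGradientAt.hasFDerivAt
    have h2 : HasFDerivAt (fun y : H => (1/2) * ⟪y, L y⟫)
        (InnerProductSpace.toDual ℝ H (L z)) z := (hasGradientAt_quad L hsym z).hasFDerivAt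
    have h3 := (h1.const_mul ((2 * thetaSeq (k+1) * h) ^ (-β))).add h2
    have heq : (InnerProductSpace.toDual ℝ H) (Gmap h β F L (k+1) z)
        = ((2 * thetaSeq (k+1) * h) ^ (-β)) • (InnerProductSpace.toDual ℝ H (gradient F z))
          + InnerProductSpace.toDual ℝ H (L z) := by
      simp [Gmap, map_add, map_smul]
    rw [heq]
    exact h3
  have hgradPhi' : ∀ z : H, gradient Φ z = Gmap h β F L (k+1) z := fun z => (hgradPhi z).gradient
  have hPhidiff : Differentiable ℝ Φ := fun z => (hgradPhi z).differentiableAt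
  have hPhiconv : ConvexOn ℝ Set.univ Φ := by
    have hfun : Φ = ((2 * thetaSeq (k+1) * h) ^ (-β)) • F + (fun y : H => (1/2) * ⟪y, L y⟫) := by
      funext y; simp [hΦdef, smul_eq_mul]
    rw [hfun]
    exact (hconv.smul hc2pos.le).add (convexOn_quad L hsym hpsd)
  have hlam0 : 0 ≤ lambar := hlam ▸ norm_nonneg L
  have hbase : (((k+1:ℕ)):ℝ) * h = 2 * thetaSeq (k+1) * h := by
    rw [thetaSeq_succ]; push_cast; ring
  have hMdef : LSmooth lambar Lf h β (k+1)
      = 2 * max lambar (((2 * thetaSeq (k+1) * h) ^ (-β)) * Lf) := by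
    rw [LSmooth, hbase]
  have hMpos : 0 < LSmooth lambar Lf h β (k+1) := by
    rw [hMdef]
    have h1 : 0 < ((2 * thetaSeq (k+1) * h) ^ (-β)) * Lf := mul_pos hc2pos hLf
    have h2 : 0 < max lambar (((2 * thetaSeq (k+1) * h) ^ (-β)) * Lf) :=
      lt_max_of_lt_right h1
    linarith
  have hlipPhi : ∀ a b : H,
      ‖gradient Φ a - gradient Φ b‖ ≤ LSmooth lambar Lf h β (k+1) * ‖a - b‖ := by
    intro a b
    rw [hgradPhi' a, hgradPhi' b]
    have e : Gmap h β F L (k+1) a - Gmap h β F L (k+1) b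
        = ((2 * thetaSeq (k+1) * h) ^ (-β)) • (gradient F a - gradient F b) + L (a - b) := by
      simp [Gmap, map_sub, smul_sub]; abel
    rw [e]
    have h1 : ‖((2 * thetaSeq (k+1) * h) ^ (-β)) • (gradient F a - gradient F b)‖
        ≤ ((2 * thetaSeq (k+1) * h) ^ (-β)) * (Lf * ‖a - b‖) := by
      rw [norm_smul, Real.norm_eq_abs, abs_of_pos hc2pos]
      exact mul_le_mul_of_nonneg_left (hlip a b) hc2pos.le
    have h2 : ‖L (a - b)‖ ≤ lambar * ‖a - b‖ := hlam ▸ L.le_opNorm (a - b)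
    have h3 := norm_add_le (((2 * thetaSeq (k+1) * h) ^ (-β)) • (gradient F a - gradient F b)) (L (a - b))
    have hMb : ((2 * thetaSeq (k+1) * h) ^ (-β)) * Lf + lambar ≤ LSmooth lambar Lf h β (k+1) := by
      rw [hMdef]
      have ha1 := le_max_left lambar (((2 * thetaSeq (k+1) * h) ^ (-β)) * Lf)
      have ha2 := le_max_right lambar (((2 * thetaSeq (k+1) * h) ^ (-β)) * Lf)
      linarith
    nlinarith [norm_nonneg (a - b), h1, h2, h3, hMb]
  have hsM : s (k+1) * LSmooth lambar Lf h β (k+1) ≤ 2 := (le_div_iff₀ hMpos).mp hstep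
  have hquarter : s (k+1) / 4 ≤ 1 / (2 * LSmooth lambar Lf h β (k+1)) := by
    rw [div_le_div_iff₀ (by norm_num) (by positivity)]
    nlinarith [hsM]
  have hE2 : 0 ≤ (((2 * thetaSeq (k+1) * h) ^ (-β)) * (F (X (k+1)) - F Xs) + (1 / 2) * ⟪X (k+1) - Xs, L (X (k+1) - Xs)⟫) := by
    have h1 := hmin (X (k+1))
    have h2 := hpsd (X (k+1) - Xs)
    have h3 := mul_nonneg hc2pos.le (sub_nonneg.2 h1)
    linarith
  have hF2 : (((2 * thetaSeq (k+1) * h) ^ (-β)) * (F (X (k+1)) - F Xs) + (1 / 2) * ⟪X (k+1) - Xs, L (X (k+1) - Xs)⟫) + (s (k+1)/4) * ‖G2‖^2 ≤ ⟪X (k+1) - Xs, G2⟫ := by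
    set M := LSmooth lambar Lf h β (k+1) with hMs
    have hMne : M ≠ 0 := ne_of_gt hMpos
    have d1 := descent_lemma Φ hPhidiff M hMpos.le hlipPhi Xs (Xs + M⁻¹ • G2)
    have d2 := grad_ineq Φ hPhidiff hPhiconv (X (k+1)) (Xs + M⁻¹ • G2)
    rw [hgradPhi'] at d1 d2
    have hG2Xs : Gmap h β F L (k+1) Xs = 0 := by rw [Gmap, hgrad0, hXs]; simp
    rw [hG2Xs] at d1
    rw [← hG2] at d2
    have e1 : Xs + M⁻¹ • G2 - Xs = M⁻¹ • G2 := by abel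
    rw [e1] at d1
    simp only [inner_zero_left, add_zero] at d1
    have e2 : ‖M⁻¹ • G2‖^2 = M⁻¹^2 * ‖G2‖^2 := by
      rw [norm_smul, Real.norm_eq_abs, abs_of_pos (inv_pos.2 hMpos)]; ring
    rw [e2] at d1
    have e4 : ⟪G2, Xs + M⁻¹ • G2 - X (k+1)⟫ = -⟪X (k+1) - Xs, G2⟫ + M⁻¹ * ‖G2‖^2 := by
      have e3 : Xs + M⁻¹ • G2 - X (k+1) = -(X (k+1) - Xs) + M⁻¹ • G2 := by abel
      rw [e3, inner_add_right, inner_neg_right, real_inner_smul_right,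
        real_inner_self_eq_norm_sq, real_inner_comm]
    rw [e4] at d2
    have hchain := le_trans d2 d1
    have hv1 : Φ Xs = ((2 * thetaSeq (k+1) * h) ^ (-β)) * F Xs := by
      simp only [hΦdef]; rw [hXsin Xs]; ring
    have hv2 : Φ (X (k+1)) = ((2 * thetaSeq (k+1) * h) ^ (-β)) * F (X (k+1))
        + (1/2) * ⟪X (k+1) - Xs, L (X (k+1) - Xs)⟫ := by
      simp only [hΦdef]; rw [hquadXs (X (k+1))]
    rw [hv1, hv2] at hchain
    have hhalf : M/2 * (M⁻¹^2 * ‖G2‖^2) = (1/(2*M)) * ‖G2‖^2 := by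
      field_simp
    rw [hhalf] at hchain
    have hfin : (s (k+1)/4) * ‖G2‖^2 ≤ (1/(2*M)) * ‖G2‖^2 :=
      mul_le_mul_of_nonneg_right hquarter (sq_nonneg _)
    have hMn : M⁻¹ * ‖G2‖^2 = (1/(2*M)) * ‖G2‖^2 + (1/(2*M)) * ‖G2‖^2 := by
      field_simp; ring
    rw [hMn] at hchain
    linarith [hchain, hfin]
  have ha : aSeq h β F L Xs X k = (((2 * thetaSeq k * h) ^ (-β)) * (F (X k) - F Xs) + (1 / 2) * ⟪X k - Xs, L (X k - Xs)⟫) - (((2 * thetaSeq (k+1) * h) ^ (-β)) * (F (X (k+1)) - F Xs) + (1 / 2) * ⟪X (k+1) - Xs, L (X (k+1) - Xs)⟫) - (⟪X k - Xs, G2⟫ - ⟪X (k+1) - Xs, G2⟫) := by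
    simp only [aSeq]
    rw [← hG2]
    have hsplit : ⟪G2, X k - X (k+1)⟫ = ⟪X k - Xs, G2⟫ - ⟪X (k+1) - Xs, G2⟫ := by
      rw [real_inner_comm]
      have e : X k - X (k+1) = (X k - Xs) - (X (k+1) - Xs) := by abel
      rw [e, inner_sub_left]
    rw [hsplit]; ring
  have hr0 : rSeq h β F L Xs X k = 0 := by
    simp [rSeq, hgrad0]
  have hwdef : wSeq h β F L X k = ⟪G2, G1⟫ := by
    simp only [wSeq, ← hG1, ← hG2]
  have hq0 : 0 ≤ (((2 * thetaSeq k * h) ^ (-β)) * (F (X k) - F Xs) + (1 / 2) * ⟪X k - Xs, L (X k - Xs)⟫) - (((2 * thetaSeq (k+1) * h) ^ (-β)) * (F (X (k+1)) - F Xs) + (1 / 2) * ⟪X (k+1) - Xs, L (X (k+1) - Xs)⟫) - (⟪X k - Xs, G2⟫ - ⟪X (k+1) - Xs, G2⟫)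
      - (s (k+1)/4)*‖G1‖^2 - (s (k+1)/4)*‖G2‖^2 + (s k/2)*⟪G2, G1⟫ := by
    rcases le_or_gt (wSeq h β F L X k) 0 with hw0 | hw0
    · have hc := hcase₁ hw0 (le_of_eq hr0.symm)
      have hb : bSeq h β F L X k = ‖G1‖^2 - 2*⟪G2, G1⟫ + ‖G2‖^2 := by
        simp only [bSeq]; rw [← hG1, ← hG2, norm_sub_sq_real, real_inner_comm]
      rw [hb, ha] at hc
      rw [hwdef] at hw0
      exact q_aux1 _ _ _ _ _ _ hmono hw0 hc
    · have hc := hcase₃ hw0 (le_of_eq hr0.symm)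
      have hbt : btilSeq h β F L X k = ‖G1‖^2 + ‖G2‖^2 := by
        simp only [btilSeq, ← hG1, ← hG2]
      have hat : atilSeq h β F L Xs X s k = aSeq h β F L Xs X k + (s k/2)*⟪G2, G1⟫ := by
        simp only [atilSeq, ← hG1, ← hG2]
      rw [hbt, hat, ha] at hc
      exact q_aux2 _ _ _ _ _ _ hc
  have ht2ne : thetaSeq (k+1)^2 ≠ 0 := by positivity
  have hZv : (thetaSeq (k+1)^2 - thetaSeq k^2) • (Z (k+1) - Xs)
      = thetaSeq (k+1)^2 • (X (k+1) - Xs) - thetaSeq k^2 • (X k - Xs)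
        + (thetaSeq k^2 * (s k/2)) • G1 := by
    rw [hXupd k hk, hXp k hk, ← hG1]
    match_scalars <;> field_simp <;> ring
  have hIu : (thetaSeq (k+1)^2 - thetaSeq k^2) * ⟪Z (k+1) - Xs, G2⟫
      = thetaSeq (k+1)^2 * ⟪X (k+1) - Xs, G2⟫ - thetaSeq k^2 * ⟪X k - Xs, G2⟫
        + (thetaSeq k^2 * (s k/2)) * ⟪G1, G2⟫ := by
    have hcg := congrArg (fun z : H => ⟪z, G2⟫) hZv
    simpa [inner_sub_left, inner_add_left, real_inner_smul_left] using hcg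
  have hI : 2*thetaSeq (k+1)*⟪Z (k+1) - Xs, G2⟫
      = 2*(ASeq k + thetaSeq (k+1))*⟪X (k+1) - Xs, G2⟫ - 2*ASeq k*⟪X k - Xs, G2⟫ + ASeq k*(s k)*⟪G2, G1⟫ := by
    have hd := dSeq_pos k
    have hN4 := ASeq_mul k
    have hN5 := ASeq_add_mul k
    have hcomm : ⟪G1, G2⟫ = ⟪G2, G1⟫ := real_inner_comm _ _
    apply mul_left_cancel₀ (ne_of_gt hd)
    linear_combination (2*thetaSeq (k+1)) * hIu - (2*⟪X (k+1) - Xs, G2⟫) * hN5 + (2*⟪X k - Xs, G2⟫) * hN4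
      - (s k * ⟪G2, G1⟫) * hN4 + (thetaSeq (k+1) * thetaSeq k^2 * s k) * hcomm
  have hVk : VSeq h β F L Xs X Z s k
      = 2*ASeq k*((((2 * thetaSeq k * h) ^ (-β)) * (F (X k) - F Xs) + (1 / 2) * ⟪X k - Xs, L (X k - Xs)⟫) - (s k/4)*‖G1‖^2) + (1/s k)*‖Z (k+1) - Xs‖^2 := by
    simp only [VSeq, ← hG1]
  have hVk1 : VSeq h β F L Xs X Z s (k+1)
      = 2*ASeq (k+1)*((((2 * thetaSeq (k+1) * h) ^ (-β)) * (F (X (k+1)) - F Xs) + (1 / 2) * ⟪X (k+1) - Xs, L (X (k+1) - Xs)⟫) - (s (k+1)/4)*‖G2‖^2) + (1/s (k+1))*‖Z (k+1) - Xs‖^2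
        - 2*thetaSeq (k+1)*⟪Z (k+1) - Xs, G2⟫ + s (k+1)*thetaSeq (k+1)^2*‖G2‖^2 := by
    simp only [VSeq]
    rw [← hG2]
    have hz : Z (k+1+1) - Xs = (Z (k+1) - Xs) - (s (k+1)*thetaSeq (k+1)) • G2 := by
      rw [hZupd (k+1) (by omega), ← hG2]; abel
    rw [hz, norm_sub_sq_real, real_inner_smul_right, norm_smul,
      Real.norm_eq_abs, abs_of_nonneg (by positivity)]
    field_simp
    ring
  calc VSeq h β F L Xs X Z s (k+1)
      = 2*ASeq (k+1)*((((2 * thetaSeq (k+1) * h) ^ (-β)) * (F (X (k+1)) - F Xs) + (1 / 2) * ⟪X (k+1) - Xs, L (X (k+1) - Xs)⟫) - (s (k+1)/4)*‖G2‖^2) + (1/s (k+1))*‖Z (k+1) - Xs‖^2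
        - 2*thetaSeq (k+1)*⟪Z (k+1) - Xs, G2⟫ + s (k+1)*thetaSeq (k+1)^2*‖G2‖^2 := hVk1
    _ ≤ 2*ASeq k*((((2 * thetaSeq k * h) ^ (-β)) * (F (X k) - F Xs) + (1 / 2) * ⟪X k - Xs, L (X k - Xs)⟫) - (s k/4)*‖G1‖^2) + (1/s k)*‖Z (k+1) - Xs‖^2 :=
        key_ineq (ASeq k) (ASeq (k+1)) (thetaSeq (k+1)) (s k) (s (k+1))
          (((2 * thetaSeq k * h) ^ (-β)) * (F (X k) - F Xs) + (1 / 2) * ⟪X k - Xs, L (X k - Xs)⟫) (((2 * thetaSeq (k+1) * h) ^ (-β)) * (F (X (k+1)) - F Xs) + (1 / 2) * ⟪X (k+1) - Xs, L (X (k+1) - Xs)⟫) (⟪X k - Xs, G2⟫) (⟪X (k+1) - Xs, G2⟫) (⟪G2, G1⟫) (‖G1‖^2) (‖G2‖^2) (‖Z (k+1) - Xs‖^2) (⟪Z (k+1) - Xs, G2⟫)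
          (ASeq_nonneg k) htpos hs₁ hmono (ASeq_succ_le k) (P3_lemma k)
          hq0 hE2 hF2 (sq_nonneg _) (sq_nonneg _) (sq_nonneg _) hI
    _ = VSeq h β F L Xs X Z s k := hVk.symm
end
end

section
/- (Part III of the proof of Theorem 2: rate extraction.) Fix k ≥ 1 and suppose 0 < s_k ≤ 2/L̃_k and that the Lyapunov bound V_k ≤ (1/s₀)·‖X₀ − X*‖² holds for some s₀ > 0. Then the half-step iterate X_k⁺ = X_k − (s_k/2)·G_k(X_k) satisfies F(X_k⁺) − F* ≤ (2·h^β·‖X₀ − X*‖² / s₀) · k^{β−2}. -/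
open scoped RealInnerProductSpace

noncomputable section

variable {H : Type*} [NormedAddCommGroup H] [InnerProductSpace ℝ H] [FiniteDimensional ℝ H]

lemma descent_lemma_s13 (F : H → ℝ) (hF : Differentiable ℝ F) (Lf : ℝ) (hLf : 0 ≤ Lf)
    (hlip : ∀ x y : H, ‖gradient F x - gradient F y‖ ≤ Lf * ‖x - y‖) (x d : H) :
    F (x + d) ≤ F x + ⟪gradient F x, d⟫ + Lf / 2 * ‖d‖ ^ 2 := by
  have key : ∀ t : ℝ, HasDerivAt (fun t : ℝ => F (x + t • d))
      ⟪gradient F (x + t • d), d⟫ t := by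
    intro t
    have hc : HasDerivAt (fun t : ℝ => x + t • d) d t := by
      simpa using ((hasDerivAt_id t).smul_const d).const_add x
    have hf := (hF (x + t • d)).hasGradientAt
    rw [hasGradientAt_iff_hasFDerivAt] at hf
    have := hf.comp_hasDerivAt t hc
    simp only [InnerProductSpace.toDual_apply_apply] at this
    exact this
  set φ : ℝ → ℝ := fun t => F (x + t • d) - t * ⟪gradient F x, d⟫
      - Lf / 2 * t ^ 2 * ‖d‖ ^ 2 with hφdef
  have hφ : ∀ t : ℝ, HasDerivAt φ (⟪gradient F (x + t • d), d⟫ - ⟪gradient F x, d⟫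
      - Lf / 2 * (2 * t) * ‖d‖ ^ 2) t := by
    intro t
    have h1 : HasDerivAt (fun t : ℝ => t * ⟪gradient F x, d⟫) ⟪gradient F x, d⟫ t := by
      simpa using (hasDerivAt_id t).mul_const ⟪gradient F x, d⟫
    have h2 : HasDerivAt (fun t : ℝ => Lf / 2 * t ^ 2 * ‖d‖ ^ 2)
        (Lf / 2 * (2 * t) * ‖d‖ ^ 2) t := by
      have := (((hasDerivAt_pow 2 t).const_mul (Lf / 2)).mul_const (‖d‖ ^ 2))
      exact this.congr_deriv (by ring)
    exact ((key t).sub h1).sub h2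
  have anti : AntitoneOn φ (Set.Icc (0:ℝ) 1) := by
    apply antitoneOn_of_deriv_nonpos (convex_Icc 0 1)
    · exact (Differentiable.continuous (fun t => (hφ t).differentiableAt)).continuousOn
    · exact (Differentiable.differentiableOn (fun t => (hφ t).differentiableAt))
    · intro t ht
      rw [interior_Icc] at ht
      rw [(hφ t).deriv]
      have h1 : ⟪gradient F (x + t • d) - gradient F x, d⟫
          ≤ ‖gradient F (x + t • d) - gradient F x‖ * ‖d‖ := real_inner_le_norm _ _
      have h2 : ‖gradient F (x + t • d) - gradient F x‖ ≤ Lf * (t * ‖d‖) := by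
        have := hlip (x + t • d) x
        simpa [norm_smul, abs_of_pos ht.1] using this
      have h3 : ⟪gradient F (x + t • d), d⟫ - ⟪gradient F x, d⟫
          = ⟪gradient F (x + t • d) - gradient F x, d⟫ := (inner_sub_left _ _ _).symm
      have hd : (0:ℝ) ≤ ‖d‖ := norm_nonneg d
      nlinarith [mul_le_mul_of_nonneg_right h2 hd]
  have h01 := anti (Set.left_mem_Icc.2 zero_le_one) (Set.right_mem_Icc.2 zero_le_one) zero_le_one
  simp only [hφdef] at h01
  norm_num at h01
  rw [← inner_gradient_left] at h01
  linarith

set_option maxHeartbeats 1000000 in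
/-- Rate extraction (proof of Theorem 2, Part III): if `V_k ≤ (1/s₀)‖X₀ − X*‖²`,
then the half-step iterate `X_k⁺` satisfies
`F(X_k⁺) − F* ≤ (2h^β ‖X₀ − X*‖²/s₀)·k^{β−2}`. -/
theorem rate_extraction
    (F : H → ℝ) (hF : Differentiable ℝ F) (hconv : ConvexOn ℝ Set.univ F)
    (Lf : ℝ) (hLf : 0 < Lf)
    (hlip : ∀ x y : H, ‖gradient F x - gradient F y‖ ≤ Lf * ‖x - y‖)
    (L : H →L[ℝ] H) (hsym : ∀ x y : H, ⟪L x, y⟫ = ⟪x, L y⟫)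
    (hpsd : ∀ x : H, 0 ≤ ⟪x, L x⟫)
    (lambar : ℝ) (hlam : ‖L‖ = lambar)
    (Xs : H) (hXs : L Xs = 0) (hmin : ∀ Y : H, F Xs ≤ F Y)
    (h β : ℝ) (hh : 0 < h) (hβ0 : 0 < β) (hβ2 : β < 2)
    (X Xp Z : ℕ → H) (s : ℕ → ℝ)
    (hspos : ∀ k, 1 ≤ k → 0 < s k)
    (hXp : ∀ k, 1 ≤ k → Xp k = X k - (s k / 2) • Gmap h β F L k (X k))
    (hZupd : ∀ k, 1 ≤ k → Z (k + 1) = Z k - (s k * thetaSeq k) • Gmap h β F L k (X k))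
    (hXupd : ∀ k, 1 ≤ k → X (k + 1) = (thetaSeq k ^ 2 / thetaSeq (k + 1) ^ 2) • Xp k
        + (1 - thetaSeq k ^ 2 / thetaSeq (k + 1) ^ 2) • Z (k + 1))
    (k : ℕ) (hk : 1 ≤ k)
    (hstep : s k ≤ 2 / LSmooth lambar Lf h β k)
    (s₀ : ℝ) (hs₀ : 0 < s₀)
    (hV : VSeq h β F L Xs X Z s k ≤ (1 / s₀) * ‖X 0 - Xs‖ ^ 2) :
    F (Xp k) - F Xs ≤ (2 * h ^ β * ‖X 0 - Xs‖ ^ 2 / s₀) * (k : ℝ) ^ (β - 2) := by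
  have kpos : (0:ℝ) < (k:ℝ) := by exact_mod_cast hk
  have kr1 : (1:ℝ) ≤ (k:ℝ) := by exact_mod_cast hk
  set c : ℝ := ((k:ℝ) * h) ^ (-β) with hcdef
  have hbase : 2 * thetaSeq k * h = (k:ℝ) * h := by unfold thetaSeq; ring
  have hc : 0 < c := Real.rpow_pos_of_pos (by positivity) _
  set G : H := Gmap h β F L k (X k) with hGdef
  have hGe : G = c • gradient F (X k) + L (X k) := by
    rw [hGdef]; unfold Gmap; rw [hbase]
  set t : ℝ := s k / 2 with htdef
  have hsk := hspos k hk
  have ht : 0 < t := by positivity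
  have hlam0 : 0 ≤ lambar := hlam ▸ norm_nonneg L
  have hLk : 0 < LSmooth lambar Lf h β k := by
    have h1 : (0:ℝ) < ((k:ℝ) * h) ^ (-β) * Lf := by positivity
    have h2 := le_max_right lambar (((k:ℝ) * h) ^ (-β) * Lf)
    unfold LSmooth; linarith
  have hMs : c * Lf + lambar ≤ LSmooth lambar Lf h β k := by
    have h1 := le_max_left lambar (((k:ℝ) * h) ^ (-β) * Lf)
    have h2 := le_max_right lambar (((k:ℝ) * h) ^ (-β) * Lf)
    unfold LSmooth; rw [hcdef]; linarith
  have hts : s k * LSmooth lambar Lf h β k ≤ 2 := (le_div_iff₀ hLk).mp hstep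
  have hMt : (c * Lf + lambar) * t ≤ 1 := by
    have := mul_le_mul_of_nonneg_right hMs ht.le
    have h2 : LSmooth lambar Lf h β k * t ≤ 1 := by rw [htdef]; nlinarith
    linarith
  set d : H := (-t) • G with hddef
  have hXpd : Xp k = X k + d := by
    rw [hXp k hk, hddef, htdef, neg_smul, ← sub_eq_add_neg]
  have hdF := descent_lemma_s13 F hF Lf hLf.le hlip (X k) d
  have hLsub : ∀ y : H, L (y - Xs) = L y := fun y => by rw [map_sub, hXs, sub_zero]
  have hquad : ⟪(X k + d) - Xs, L ((X k + d) - Xs)⟫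
      = ⟪X k - Xs, L (X k - Xs)⟫ + 2 * ⟪L (X k), d⟫ + ⟪d, L d⟫ := by
    have h1 : (X k + d) - Xs = (X k - Xs) + d := by abel
    rw [h1, map_add, inner_add_left, inner_add_right, inner_add_right]
    have h2 : ⟪X k - Xs, L d⟫ = ⟪L (X k), d⟫ := by
      rw [← hsym (X k - Xs) d, hLsub]
    have h3 : ⟪d, L (X k - Xs)⟫ = ⟪L (X k), d⟫ := by
      rw [hLsub, real_inner_comm]
    rw [h2, h3]; ring
  have hdL : ⟪d, L d⟫ ≤ lambar * ‖d‖ ^ 2 := by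
    calc ⟪d, L d⟫ ≤ ‖d‖ * ‖L d‖ := real_inner_le_norm _ _
      _ ≤ ‖d‖ * (‖L‖ * ‖d‖) := by
          exact mul_le_mul_of_nonneg_left (L.le_opNorm d) (norm_nonneg d)
      _ = lambar * ‖d‖ ^ 2 := by rw [hlam]; ring
  have hGd : c * ⟪gradient F (X k), d⟫ + ⟪L (X k), d⟫ = -t * ‖G‖ ^ 2 := by
    have h1 : c * ⟪gradient F (X k), d⟫ + ⟪L (X k), d⟫ = ⟪G, d⟫ := by
      rw [hGe, inner_add_left, real_inner_smul_left]
    rw [h1, hddef, real_inner_smul_right, real_inner_self_eq_norm_sq]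
  have hdn : ‖d‖ ^ 2 = t ^ 2 * ‖G‖ ^ 2 := by
    rw [hddef, norm_smul, Real.norm_eq_abs, abs_neg, abs_of_pos ht]; ring
  have hQp : 0 ≤ ⟪Xp k - Xs, L (Xp k - Xs)⟫ := hpsd _
  have hG2 : (0:ℝ) ≤ ‖G‖ ^ 2 := sq_nonneg _
  have hkey : c * (F (Xp k) - F Xs)
      ≤ c * (F (X k) - F Xs) + (1/2) * ⟪X k - Xs, L (X k - Xs)⟫
        - (s k / 4) * ‖G‖ ^ 2 := by
    rw [hXpd] at hQp ⊢
    have hF1 : c * F (X k + d) ≤ c * F (X k) + c * ⟪gradient F (X k), d⟫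
        + c * (Lf / 2 * ‖d‖ ^ 2) := by nlinarith [hdF]
    have hmL := mul_le_mul_of_nonneg_right hMt (by positivity : (0:ℝ) ≤ t * ‖G‖ ^ 2 / 2)
    have hsk4 : s k / 4 = t / 2 := by rw [htdef]; ring
    rw [hsk4]
    have hQ1 : (1/2) * ⟪(X k + d) - Xs, L ((X k + d) - Xs)⟫
        ≤ (1/2) * ⟪X k - Xs, L (X k - Xs)⟫ + ⟪L (X k), d⟫ + (lambar/2) * ‖d‖ ^ 2 := by
      rw [hquad]; linarith
    have hprod : c * (Lf / 2 * ‖d‖ ^ 2) + (lambar/2) * ‖d‖ ^ 2 ≤ t / 2 * ‖G‖ ^ 2 := by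
      have e : c * (Lf / 2 * ‖d‖ ^ 2) + (lambar/2) * ‖d‖ ^ 2
          = (c * Lf + lambar) * t * (t * ‖G‖ ^ 2 / 2) := by rw [hdn]; ring
      have e2 : (1:ℝ) * (t * ‖G‖ ^ 2 / 2) = t / 2 * ‖G‖ ^ 2 := by ring
      linarith [hmL]
    rw [mul_sub, mul_sub]
    linarith [hF1, hQ1, hGd, hQp, hprod]
  -- lower bound on A_k
  have hA : (k:ℝ) ^ 2 / 4 ≤ ASeq k := by
    unfold ASeq cSeq thetaSeq
    push_cast
    have hden : (((k:ℝ) + 1) / 2) ^ 2 - ((k:ℝ) / 2) ^ 2 = (2 * (k:ℝ) + 1) / 4 := by ring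
    rw [hden]
    have heq : ((k:ℝ) + 1) / 2 / ((2 * (k:ℝ) + 1) / 4) * ((k:ℝ) / 2) ^ 2
        = (k:ℝ) ^ 2 * ((k:ℝ) + 1) / (2 * (2 * (k:ℝ) + 1)) := by
      field_simp; ring
    rw [heq, div_le_div_iff₀ (by norm_num) (by positivity)]
    nlinarith
  have hA0 : 0 < ASeq k := lt_of_lt_of_le (by positivity) hA
  have hVe : 2 * ASeq k * (c * (F (X k) - F Xs) + (1/2) * ⟪X k - Xs, L (X k - Xs)⟫
      - (s k / 4) * ‖G‖ ^ 2) ≤ VSeq h β F L Xs X Z s k := by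
    unfold VSeq
    rw [← hGdef]
    have hcc : (2 * thetaSeq k * h) ^ (-β) = c := by rw [hbase, hcdef]
    rw [hcc]
    have : 0 ≤ (1 / s k) * ‖Z (k+1) - Xs‖ ^ 2 := by positivity
    linarith
  have hmain : 2 * ASeq k * c * (F (Xp k) - F Xs) ≤ (1 / s₀) * ‖X 0 - Xs‖ ^ 2 := by
    have h1 := mul_le_mul_of_nonneg_left hkey (by positivity : (0:ℝ) ≤ 2 * ASeq k)
    calc 2 * ASeq k * c * (F (Xp k) - F Xs)
        = 2 * ASeq k * (c * (F (Xp k) - F Xs)) := by ring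
      _ ≤ 2 * ASeq k * (c * (F (X k) - F Xs) + (1/2) * ⟪X k - Xs, L (X k - Xs)⟫
          - (s k / 4) * ‖G‖ ^ 2) := h1
      _ ≤ VSeq h β F L Xs X Z s k := hVe
      _ ≤ (1 / s₀) * ‖X 0 - Xs‖ ^ 2 := hV
  -- numeric extraction
  have hpow : c * ((k:ℝ) ^ β * h ^ β) = 1 := by
    rw [hcdef, ← Real.mul_rpow kpos.le hh.le, Real.rpow_neg (by positivity)]
    exact inv_mul_cancel₀ (ne_of_gt (Real.rpow_pos_of_pos (by positivity) _))
  have hkb2 : (k:ℝ) ^ (β - 2) = (k:ℝ) ^ β / (k:ℝ) ^ 2 := by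
    rw [Real.rpow_sub kpos, show ((2:ℝ) = ((2:ℕ):ℝ)) by norm_num, Real.rpow_natCast]
  have h2Ac : 0 < 2 * ASeq k * c := by positivity
  have hscal : 1 / (2 * ASeq k * c) ≤ 2 * h ^ β * (k:ℝ) ^ (β - 2) := by
    rw [div_le_iff₀ h2Ac]
    have heq2 : 2 * h ^ β * (k:ℝ) ^ (β - 2) * (2 * ASeq k * c)
        = 4 * ASeq k / (k:ℝ) ^ 2 * (c * ((k:ℝ) ^ β * h ^ β)) := by
      rw [hkb2]; ring
    rw [heq2, hpow, mul_one, le_div_iff₀ (by positivity : (0:ℝ) < (k:ℝ) ^ 2)]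
    linarith
  have hD1 : F (Xp k) - F Xs ≤ (1 / s₀ * ‖X 0 - Xs‖ ^ 2) / (2 * ASeq k * c) := by
    rw [le_div_iff₀ h2Ac]
    nlinarith [hmain]
  calc F (Xp k) - F Xs
      ≤ (1 / s₀ * ‖X 0 - Xs‖ ^ 2) / (2 * ASeq k * c) := hD1
    _ = (1 / (2 * ASeq k * c)) * (1 / s₀ * ‖X 0 - Xs‖ ^ 2) := by ring
    _ ≤ (2 * h ^ β * (k:ℝ) ^ (β - 2)) * (1 / s₀ * ‖X 0 - Xs‖ ^ 2) :=
        mul_le_mul_of_nonneg_right hscal (by positivity)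
    _ = (2 * h ^ β * ‖X 0 - Xs‖ ^ 2 / s₀) * (k:ℝ) ^ (β - 2) := by ring
end
end
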